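/- Let (A,R) be a unital Rota–Baxter algebra of weight θ, R̃ := θ·Id − R, x ∈ A, and let f, h ∈ A[[λ]] be the unique solutions of f = 1 + λR(f·x) and h = 1 + λR̃(x·h). Then f is invertible in A[[λ]] with inverse f⁻¹ = 1 − λR(x·h), i.e., f·(1 − λR(x·h)) = 1 = (1 − λR(x·h))·f. -/

import Mathlib

theorem atkinson_inverse {k A : Type*} [Field k] [CharZero k] [Ring A] [Algebra k A]
    (θ : k) (R : A →ₗ[k] A)
    (hR : ∀ a b : A, R a * R b = R (R a * b + a * R b - θ • (a * b)))
    (Rext Rtext : PowerSeries A → PowerSeries A)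
    (hRext : ∀ (F : PowerSeries A) (n : ℕ),
      PowerSeries.coeff n (Rext F) = R (PowerSeries.coeff n F))
    (hRtext : ∀ (F : PowerSeries A) (n : ℕ),
      PowerSeries.coeff n (Rtext F) =
        θ • PowerSeries.coeff n F - R (PowerSeries.coeff n F))
    (x : A) (f h : PowerSeries A)
    (hf : f = 1 + PowerSeries.X * Rext (f * PowerSeries.C x))
    (hh : h = 1 + PowerSeries.X * Rtext (PowerSeries.C x * h)) :
    f * (1 - PowerSeries.X * Rext (PowerSeries.C x * h)) = 1 ∧
    (1 - PowerSeries.X * Rext (PowerSeries.C x * h)) * f = 1 := by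
  classical
  open PowerSeries in
  -- abbreviations
  set c : PowerSeries A := PowerSeries.C x with hc
  set a : PowerSeries A := Rext (f * c) with ha
  set b : PowerSeries A := Rext (c * h) with hb
  -- X commutes with everything
  have hX : ∀ u v : PowerSeries A, u * (PowerSeries.X * v) = PowerSeries.X * (u * v) := by
    intro u v
    rw [← mul_assoc, (PowerSeries.commute_X u).eq, mul_assoc]
  -- Rtext in terms of Rext
  have hRt : ∀ F : PowerSeries A, Rtext F = θ • F - Rext F := by
    intro F
    ext n
    rw [hRtext, map_sub, PowerSeries.coeff_smul, hRext]
  -- Rext is additive/subtractive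
  have hRsub : ∀ F G : PowerSeries A, Rext (F - G) = Rext F - Rext G := by
    intro F G
    ext n
    simp only [map_sub, hRext]
  -- Rext commutes with X *
  have hRX : ∀ F : PowerSeries A, Rext (PowerSeries.X * F) = PowerSeries.X * Rext F := by
    intro F
    ext n
    cases n with
    | zero =>
        rw [hRext]
        have h0 : ∀ G : PowerSeries A,
            PowerSeries.coeff 0 (PowerSeries.X * G) = 0 := by
          intro G
          rw [PowerSeries.coeff_zero_eq_constantCoeff, map_mul]
          simp
        rw [h0, h0, map_zero]
    | succ n =>
        rw [hRext, PowerSeries.coeff_succ_X_mul, PowerSeries.coeff_succ_X_mul, hRext]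
  -- Rota–Baxter identity for Rext
  have hRB : ∀ F G : PowerSeries A,
      Rext F * Rext G = Rext (Rext F * G + F * Rext G - θ • (F * G)) := by
    intro F G
    ext n
    rw [hRext, map_sub, map_add, PowerSeries.coeff_smul,
      PowerSeries.coeff_mul, PowerSeries.coeff_mul, PowerSeries.coeff_mul,
      PowerSeries.coeff_mul, Finset.smul_sum, ← Finset.sum_add_distrib,
      ← Finset.sum_sub_distrib, map_sum]
    simp only [hRext]
    exact Finset.sum_congr rfl fun p _ => hR _ _
  -- fixed point equations in convenient form
  have hfc : f * c = c + PowerSeries.X * (a * c) := by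
    conv_lhs => rw [hf]
    rw [add_mul, one_mul, mul_assoc]
  have hch : c * h = c + PowerSeries.X * (θ • (c * (c * h)) - c * b) := by
    conv_lhs => rw [hh]
    rw [hRt, mul_add, mul_one, hX, mul_sub, mul_smul_comm]
  -- the key identity: a - b = X * (a * b)
  have harg : a * (c * h) + (f * c) * b - θ • ((f * c) * (c * h))
      = a * c - θ • (c * (c * h)) + c * b := by
    nth_rewrite 1 [hch]
    rw [hfc]
    simp only [mul_add, add_mul, mul_sub, sub_mul, smul_add, smul_sub, mul_smul_comm,
      smul_mul_assoc, hX, mul_assoc]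
    abel
  have key : a - b = PowerSeries.X * (a * b) := by
    have h1 : f * c - c * h
        = PowerSeries.X * (a * c - θ • (c * (c * h)) + c * b) := by
      rw [hfc]
      nth_rewrite 1 [hch]
      simp only [mul_add, mul_sub]
      abel
    calc a - b = Rext (f * c - c * h) := by rw [hRsub]
      _ = PowerSeries.X * Rext (a * c - θ • (c * (c * h)) + c * b) := by rw [h1, hRX]
      _ = PowerSeries.X * (a * b) := by
            rw [hRB (f * c) (c * h), ← ha, ← hb, harg]
  -- right inverse
  have hright : f * (1 - PowerSeries.X * b) = 1 := by
    have hz : PowerSeries.X * a - PowerSeries.X * b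
        - (PowerSeries.X * a) * (PowerSeries.X * b) = 0 := by
      have : (PowerSeries.X * a) * (PowerSeries.X * b)
          = PowerSeries.X * (a - b) := by
        rw [key, mul_assoc, hX]
      rw [this, mul_sub]
      abel
    calc f * (1 - PowerSeries.X * b)
        = 1 + (PowerSeries.X * a - PowerSeries.X * b
            - (PowerSeries.X * a) * (PowerSeries.X * b)) := by
          rw [hf]; noncomm_ring
      _ = 1 := by rw [hz, add_zero]
  -- constant coefficient of f is 1
  have hc0 : PowerSeries.constantCoeff f = ((1 : Aˣ) : A) := by
    rw [hf]
    simp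
  -- left inverse via invOfUnit
  have hfw : f * PowerSeries.invOfUnit f 1 = 1 := PowerSeries.mul_invOfUnit f 1 hc0
  have hwf : PowerSeries.invOfUnit f 1 * f = 1 := PowerSeries.invOfUnit_mul f 1 hc0
  have hgw : (1 - PowerSeries.X * b) = PowerSeries.invOfUnit f 1 := by
    calc (1 - PowerSeries.X * b)
        = (PowerSeries.invOfUnit f 1 * f) * (1 - PowerSeries.X * b) := by
          rw [hwf, one_mul]
      _ = PowerSeries.invOfUnit f 1 * (f * (1 - PowerSeries.X * b)) := by
          rw [mul_assoc]
      _ = PowerSeries.invOfUnit f 1 := by rw [hright, mul_one]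
  exact ⟨hright, by rw [hgw, hwf]⟩
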